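/- For m odd with m ≥ 5 and 0 ≤ k ≤ (m−4)/6, the number 2^m/9 − 1/3 − 2^{m−4−6k}/9 = (2^m − 3 − 2^{m−4−6k})/9 is an odd natural number with total stopping time exactly m. -/
import Mathlib


/-- The Collatz map `T`. -/
def T (n : ℕ) : ℕ := if n % 2 = 1 then (3 * n + 1) / 2 else n / 2

lemma T_odd (x : ℕ) (h : x % 2 = 1) : T x = (3 * x + 1) / 2 := by simp [T, h]

lemma T_even (x : ℕ) (h : x % 2 = 0) : T x = x / 2 := by simp [T, h]

lemma iter_pow_mul (x : ℕ) : ∀ i p, i ≤ p → T^[i] (2 ^ p * x) = 2 ^ (p - i) * x := by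
  intro i
  induction i with
  | zero => intro p _; simp
  | succ i ih =>
    intro p hp
    rw [Function.iterate_succ_apply]
    have h2 : 2 ^ p * x = 2 * (2 ^ (p - 1) * x) := by
      rw [← mul_assoc, ← pow_succ']
      congr 2
      omega
    have hmod : (2 ^ p * x) % 2 = 0 := by omega
    rw [T_even _ hmod, h2, Nat.mul_div_cancel_left _ (by norm_num : 0 < 2),
      ih (p - 1) (by omega), show p - 1 - i = p - (i + 1) from by omega]

theorem stmt_18 (m k : ℕ) (hodd : m % 2 = 1) (hm : 5 ≤ m) (hk : k ≤ (m - 4) / 6) :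
    9 ∣ 2 ^ m - 3 - 2 ^ (m - 4 - 6 * k) ∧
    (2 ^ m - 3 - 2 ^ (m - 4 - 6 * k)) / 9 % 2 = 1 ∧
    T^[m] ((2 ^ m - 3 - 2 ^ (m - 4 - 6 * k)) / 9) = 1 ∧
    ∀ j : ℕ, j < m → T^[j] ((2 ^ m - 3 - 2 ^ (m - 4 - 6 * k)) / 9) ≠ 1 := by
  set b := m - 4 - 6 * k with hbdef
  have h6k : 6 * k + 4 ≤ m := by omega
  have hmb : m = b + 4 + 6 * k := by omega
  have hbodd : b % 2 = 1 := by omega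
  have hb1 : 1 ≤ b := by omega
  -- the auxiliary odd number c = (2^(4+6k)-1)/3
  have hcgen : ∀ k : ℕ, ∃ c, 2 ^ (4 + 6 * k) = 3 * c + 1 ∧ c % 2 = 1 ∧ c % 3 = 2 ∧ 5 ≤ c := by
    intro k
    induction k with
    | zero => exact ⟨5, by norm_num⟩
    | succ k ih =>
      obtain ⟨c, h1, h2, h3, h4⟩ := ih
      refine ⟨64 * c + 21, ?_, by omega, by omega, by omega⟩
      rw [show 4 + 6 * (k + 1) = (4 + 6 * k) + 6 from by ring, pow_add, h1]
      ring
  obtain ⟨c, hc1, hc2, hc3, hc5⟩ := hcgen k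
  have h2b3 : 2 ^ b % 3 = 2 := by
    obtain ⟨s, hs⟩ : ∃ s, b = 2 * s + 1 := ⟨b / 2, by omega⟩
    rw [hs, show (2:ℕ) ^ (2 * s + 1) = 4 ^ s * 2 from by rw [pow_succ, pow_mul]; norm_num,
      Nat.mul_mod, Nat.pow_mod]
    norm_num
  have hmul3 : (2 ^ b * c) % 3 = 1 := by
    rw [Nat.mul_mod, h2b3, hc3]
  obtain ⟨n, hn1⟩ : ∃ n, 2 ^ b * c = 3 * n + 1 := ⟨(2 ^ b * c) / 3, by omega⟩
  have hpowm : 2 ^ m = 2 ^ b * (3 * c + 1) := by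
    rw [hmb, show b + 4 + 6 * k = b + (4 + 6 * k) from by ring, pow_add, hc1]
  have haux : 2 ^ b * (3 * c + 1) = 3 * (2 ^ b * c) + 2 ^ b := by ring
  have hkey : 2 ^ m = 9 * n + 2 ^ b + 3 := by omega
  have hval : 2 ^ m - 3 - 2 ^ b = 9 * n := by omega
  have hdivval : (2 ^ m - 3 - 2 ^ b) / 9 = n := by omega
  have e1 : 2 ^ b = 2 * 2 ^ (b - 1) := by
    rw [← pow_succ']; congr 1; omega
  have e2 : 2 ^ m = 2 * 2 ^ (m - 1) := by
    rw [← pow_succ']; congr 1; omega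
  have hnodd : n % 2 = 1 := by omega
  have h2bpos : 2 ≤ 2 ^ b := by
    calc (2:ℕ) = 2 ^ 1 := rfl
    _ ≤ 2 ^ b := Nat.pow_le_pow_right (by norm_num) hb1
  have hn3 : 3 ≤ n := by
    have := Nat.mul_le_mul h2bpos hc5
    omega
  have hTn : T n = 2 ^ (b - 1) * c := by
    rw [T_odd n hnodd]
    have h : 2 * (2 ^ (b - 1) * c) = 3 * n + 1 := by
      rw [← mul_assoc, ← e1, hn1]
    omega
  have hA : ∀ j, 1 ≤ j → j ≤ b → T^[j] n = 2 ^ (b - j) * c := by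
    intro j h1 h2
    rw [show j = (j - 1) + 1 from by omega, Function.iterate_succ_apply, hTn,
      iter_pow_mul c (j - 1) (b - 1) (by omega),
      show b - 1 - (j - 1) = b - (j - 1 + 1) from by omega]
  have hTc : T c = 2 ^ (3 + 6 * k) := by
    rw [T_odd c hc2]
    have h24 : (2:ℕ) ^ (4 + 6 * k) = 2 * 2 ^ (3 + 6 * k) := by
      rw [← pow_succ']; congr 1; omega
    omega
  have hB : ∀ j, b + 1 ≤ j → j ≤ m → T^[j] n = 2 ^ (m - j) := by
    intro j h1 h2
    rw [show j = (j - (b + 1)) + (b + 1) from by omega, Function.iterate_add_apply]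
    have hb' : T^[b + 1] n = 2 ^ (3 + 6 * k) * 1 := by
      rw [Function.iterate_succ_apply', hA b hb1 le_rfl]
      simp [hTc]
    rw [hb', iter_pow_mul 1 (j - (b + 1)) (3 + 6 * k) (by omega), mul_one,
      show 3 + 6 * k - (j - (b + 1)) = m - (j - (b + 1) + (b + 1)) from by omega]
  refine ⟨⟨n, hval⟩, ?_, ?_, ?_⟩
  · rw [hdivval]; exact hnodd
  · rw [hdivval, hB m (by omega) le_rfl]
    simp
  · intro j hj
    rw [hdivval]
    rcases Nat.lt_or_ge j 1 with h | h
    · have hj0 : j = 0 := by omega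
      subst hj0
      simpa using (by omega : n ≠ 1)
    rcases Nat.lt_or_ge j (b + 1) with h' | h'
    · rw [hA j h (by omega)]
      have h1 : 1 ≤ 2 ^ (b - j) := Nat.one_le_two_pow
      have := Nat.mul_le_mul h1 hc5
      omega
    · rw [hB j h' (by omega)]
      have h2 : 2 ≤ 2 ^ (m - j) := by
        calc (2:ℕ) = 2 ^ 1 := rfl
        _ ≤ 2 ^ (m - j) := Nat.pow_le_pow_right (by norm_num) (by omega)
      omega
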